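/- Let R be a commutative ring, and I ⊂ R an ideal generated by elements s₁, …, s_m. If an R-module C is s_j-contraadjusted (Ext¹_R(R[s_j⁻¹], C) = 0) for each j, then C is I-adically complete: the canonical map C → lim_{n≥1} C/IⁿC is surjective. -/

import Mathlib

open CategoryTheory Opposite Limits

namespace ContraAux

variable {R : Type} [CommRing R]

section Alg
variable {C : Type} [AddCommGroup C] [Module R C]

/-- Solvability of the telescope equations for `s` with values in `C`. -/
def Solv (s : R) (C : Type) [AddCommGroup C] [Module R C] : Prop :=
  ∀ c : ℕ → C, ∃ b : ℕ → C, ∀ n, b n = c n + s • b (n + 1)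

lemma smul_smul_top (I₁ I₂ : Ideal R) (N : Submodule R C) :
    I₁ • (I₂ • N) = (I₁ * I₂) • N :=
  (Submodule.smul_assoc I₁ I₂ N).symm

lemma decomp (t : R) (J : Ideal R) :
    ∀ (n : ℕ) (x : C), x ∈ ((Ideal.span {t} ⊔ J) ^ n • (⊤ : Submodule R C)) →
    ∃ g : ℕ → C, (∀ k, g k ∈ (J ^ (n - k) • (⊤ : Submodule R C))) ∧
      x = ∑ k ∈ Finset.range (n + 1), t ^ k • g k := by
  intro n
  induction n with
  | zero =>
    intro x _
    refine ⟨fun _ => x, fun k => ?_, by simp⟩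
    have hT : (J ^ (0 - k) • (⊤ : Submodule R C)) = ⊤ := by
      rw [Nat.zero_sub, pow_zero, one_smul]
    rw [hT]; trivial
  | succ n ih =>
    intro x hx
    rw [pow_succ'] at hx
    rw [show ((Ideal.span {t} ⊔ J) * (Ideal.span {t} ⊔ J) ^ n) • (⊤ : Submodule R C)
        = (Ideal.span {t} ⊔ J) • ((Ideal.span {t} ⊔ J) ^ n • (⊤ : Submodule R C)) from
      Submodule.smul_assoc _ _ _] at hx
    refine Submodule.smul_induction_on hx ?_ ?_
    · rintro r hr y hy
      obtain ⟨a, haT, j, hjJ, rfl⟩ := Submodule.mem_sup.mp hr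
      obtain ⟨c, rfl⟩ := Ideal.mem_span_singleton'.mp haT
      obtain ⟨g, hg, rfl⟩ := ih y hy
      classical
      have m1 : ∀ k, (match k with | 0 => (0:C) | (k+1) => c • g k)
          ∈ J ^ (n + 1 - k) • (⊤ : Submodule R C) := by
        intro k
        match k with
        | 0 => exact Submodule.zero_mem _
        | (k+1) =>
          rw [Nat.succ_sub_succ]
          exact Submodule.smul_mem _ c (hg k)
      have m2 : ∀ k, (if k ≤ n then j • g k else (0:C))
          ∈ J ^ (n + 1 - k) • (⊤ : Submodule R C) := by
        intro k
        by_cases hk : k ≤ n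
        · rw [if_pos hk]
          have h1 := Submodule.smul_mem_smul hjJ (hg k)
          rw [smul_smul_top, ← pow_succ'] at h1
          rwa [show n - k + 1 = n + 1 - k by omega] at h1
        · rw [if_neg hk]; exact Submodule.zero_mem _
      have e1 : ∑ k ∈ Finset.range (n + 1 + 1),
          t ^ k • (match k with | 0 => (0:C) | (k+1) => c • g k)
          = (c * t) • ∑ k ∈ Finset.range (n + 1), t ^ k • g k := by
        rw [Finset.sum_range_succ', Finset.smul_sum]
        simp only [smul_zero, add_zero]
        refine Finset.sum_congr rfl fun k _ => ?_
        show t ^ (k+1) • (c • g k) = (c * t) • (t ^ k • g k)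
        rw [smul_smul, smul_smul]
        congr 1
        ring
      have e2 : ∑ k ∈ Finset.range (n + 1 + 1),
          t ^ k • (if k ≤ n then j • g k else (0:C))
          = j • ∑ k ∈ Finset.range (n + 1), t ^ k • g k := by
        rw [Finset.sum_range_succ, Finset.smul_sum]
        simp only [if_neg (Nat.not_succ_le_self n), smul_zero, add_zero]
        refine Finset.sum_congr rfl fun k hk => ?_
        rw [if_pos (Nat.lt_succ_iff.mp (Finset.mem_range.mp hk))]
        rw [smul_comm]
      refine ⟨(fun k => match k with | 0 => (0:C) | (k+1) => c • g k)
        + (fun k => if k ≤ n then j • g k else (0:C)),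
        fun k => by simp only [Pi.add_apply]; exact Submodule.add_mem _ (m1 k) (m2 k), ?_⟩
      rw [add_smul, ← e1, ← e2, ← Finset.sum_add_distrib]
      refine Finset.sum_congr rfl fun k _ => ?_
      simp only [Pi.add_apply, smul_add]
    · rintro x y ⟨gx, hgx, rfl⟩ ⟨gy, hgy, rfl⟩
      refine ⟨gx + gy, fun k => Submodule.add_mem _ (hgx k) (hgy k), ?_⟩
      simp only [Pi.add_apply, smul_add, Finset.sum_add_distrib]

lemma tri {M : Type} [AddCommMonoid M] (F : ℕ → ℕ → M) :
    ∀ N, ∑ n ∈ Finset.range N, ∑ k ∈ Finset.range (n+1), F n k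
      = ∑ k ∈ Finset.range N, ∑ i ∈ Finset.range (N - k), F (i + k) k := by
  intro N
  induction N with
  | zero => simp
  | succ N ih =>
    have h1 : ∀ k ∈ Finset.range N,
        ∑ i ∈ Finset.range (N + 1 - k), F (i + k) k
          = ∑ i ∈ Finset.range (N - k), F (i + k) k + F N k := by
      intro k hk
      have hk' : k ≤ N := le_of_lt (Finset.mem_range.mp hk)
      rw [Nat.succ_sub hk', Finset.sum_range_succ, Nat.sub_add_cancel hk']
    have h2 : ∑ k ∈ Finset.range (N + 1), ∑ i ∈ Finset.range (N + 1 - k), F (i + k) k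
        = (∑ k ∈ Finset.range N,
            (∑ i ∈ Finset.range (N - k), F (i + k) k + F N k)) + F N N := by
      rw [Finset.sum_range_succ]
      congr 1
      · exact Finset.sum_congr rfl h1
      · rw [Nat.succ_sub (le_refl N), Nat.sub_self]
        simp
    rw [Finset.sum_range_succ, ih, h2, Finset.sum_add_distrib,
      Finset.sum_range_succ (fun k => F N k) N]
    abel

lemma partialSum (m : ℕ) : ∀ (s : Fin m → R), (∀ j, Solv (s j) C) →
    ∀ (f : ℕ → C), (∀ n, f n ∈ ((Ideal.span (Set.range s)) ^ n • (⊤ : Submodule R C))) →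
    ∃ b : C, ∀ N, b - ∑ n ∈ Finset.range N, f n
      ∈ ((Ideal.span (Set.range s)) ^ N • (⊤ : Submodule R C)) := by
  induction m with
  | zero =>
    intro s _ f hf
    refine ⟨f 0, fun N => ?_⟩
    match N with
    | 0 =>
      rw [pow_zero, one_smul]; trivial
    | (N+1) =>
      have hz : ∀ k : ℕ, f (k+1) = 0 := by
        intro k
        have h1 := hf (k+1)
        rw [Set.range_eq_empty s, Ideal.span_empty, ← Ideal.zero_eq_bot,
          zero_pow (Nat.succ_ne_zero k), Ideal.zero_eq_bot, Submodule.bot_smul] at h1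
        exact (Submodule.mem_bot R).mp h1
      have hsum : ∑ n ∈ Finset.range (N+1), f n = f 0 := by
        rw [Finset.sum_range_succ', Finset.sum_eq_zero (fun k _ => hz k), zero_add]
      rw [hsum, sub_self]
      exact Submodule.zero_mem _
  | succ m ih =>
    intro s hs f hf
    set t := s (Fin.last m) with ht
    set J := Ideal.span (Set.range (s ∘ Fin.castSucc)) with hJ
    set I := Ideal.span (Set.range s) with hIdef
    have hI : I = Ideal.span {t} ⊔ J := by
      rw [hIdef, hJ, ← Ideal.span_union]
      congr 1
      ext x
      constructor
      · rintro ⟨j, rfl⟩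
        rcases Fin.eq_castSucc_or_eq_last j with ⟨i, rfl⟩ | rfl
        · exact Or.inr ⟨i, rfl⟩
        · exact Or.inl rfl
      · rintro (rfl | ⟨i, rfl⟩)
        · exact ⟨Fin.last m, rfl⟩
        · exact ⟨i.castSucc, rfl⟩
    have h1 : t ∈ I := by
      rw [hIdef]; exact Ideal.subset_span ⟨Fin.last m, rfl⟩
    have hJI : J ≤ I := by
      rw [hIdef, hJ]; exact Ideal.span_mono (Set.range_comp_subset_range _ _)
    have hdec : ∀ n, ∃ g : ℕ → C, (∀ k, g k ∈ (J ^ (n - k) • (⊤ : Submodule R C))) ∧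
        f n = ∑ k ∈ Finset.range (n + 1), t ^ k • g k := by
      intro n
      exact decomp t J n (f n) (by rw [← hI]; exact hf n)
    choose g hgmem hgsum using hdec
    have hcol : ∀ k, ∃ h : C, ∀ N, h - ∑ i ∈ Finset.range N, g (i + k) k
        ∈ (J ^ N • (⊤ : Submodule R C)) := by
      intro k
      exact ih (s ∘ Fin.castSucc) (fun j => hs j.castSucc) (fun i => g (i + k) k)
        (fun i => by have h2 := hgmem (i + k) k; rwa [Nat.add_sub_cancel] at h2)
    choose h hh using hcol
    obtain ⟨b, hb⟩ := hs (Fin.last m) h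
    refine ⟨b 0, fun N => ?_⟩
    have key1 : ∀ N, b 0 = ∑ k ∈ Finset.range N, t ^ k • h k + t ^ N • b N := by
      intro N
      induction N with
      | zero => simp
      | succ N ihN =>
        rw [ihN, hb N, smul_add, smul_smul, ← pow_succ, Finset.sum_range_succ, add_assoc]
    have key2 : ∑ n ∈ Finset.range N, f n
        = ∑ k ∈ Finset.range N, t ^ k • (∑ i ∈ Finset.range (N - k), g (i + k) k) := by
      calc ∑ n ∈ Finset.range N, f n
          = ∑ n ∈ Finset.range N, ∑ k ∈ Finset.range (n+1), t ^ k • g n k :=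
            Finset.sum_congr rfl (fun n _ => hgsum n)
        _ = ∑ k ∈ Finset.range N, ∑ i ∈ Finset.range (N - k), t ^ k • g (i + k) k :=
            tri (fun n k => t ^ k • g n k) N
        _ = _ := Finset.sum_congr rfl (fun k _ => (Finset.smul_sum).symm)
    have main : b 0 - ∑ n ∈ Finset.range N, f n
        = ∑ k ∈ Finset.range N, t ^ k • (h k - ∑ i ∈ Finset.range (N - k), g (i + k) k)
          + t ^ N • b N := by
      rw [key1 N, key2, add_sub_right_comm, ← Finset.sum_sub_distrib]
      simp only [← smul_sub]
    rw [main]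
    refine Submodule.add_mem _ (Submodule.sum_mem _ ?_) ?_
    · intro k hk
      have hk' : k ≤ N := le_of_lt (Finset.mem_range.mp hk)
      have hw := hh k (N - k)
      have hw' : h k - ∑ i ∈ Finset.range (N - k), g (i + k) k
          ∈ (I ^ (N - k) • (⊤ : Submodule R C)) :=
        Submodule.smul_mono_left (Ideal.pow_right_mono hJI (N - k)) hw
      have h3 := Submodule.smul_mem_smul (Ideal.pow_mem_pow h1 k) hw'
      rw [smul_smul_top, ← pow_add, Nat.add_sub_cancel' hk'] at h3
      exact h3
    · exact Submodule.smul_mem_smul (Ideal.pow_mem_pow h1 N) Submodule.mem_top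

end Alg

section Tele
variable (s : R)

noncomputable def tD : (ℕ →₀ R) →ₗ[R] (ℕ →₀ R) :=
  Finsupp.lsum ℕ fun n => Finsupp.lsingle n - s • Finsupp.lsingle (n + 1)

lemma tD_single (n : ℕ) (r : R) :
    tD s (Finsupp.single n r) = Finsupp.single n r - Finsupp.single (n + 1) (s * r) := by
  simp [tD, Finsupp.smul_single]

noncomputable def tE : (ℕ →₀ R) →ₗ[R] Localization.Away s :=
  Finsupp.lsum ℕ fun n =>
    LinearMap.toSpanSingleton R _ (Localization.mk 1 ⟨s ^ n, ⟨n, rfl⟩⟩)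

lemma tE_single (n : ℕ) (r : R) :
    tE s (Finsupp.single n r)
      = Localization.mk r (⟨s ^ n, ⟨n, rfl⟩⟩ : Submonoid.powers s) := by
  simp only [tE, Finsupp.lsum_single, LinearMap.toSpanSingleton_apply,
    Localization.smul_mk, smul_eq_mul, mul_one]

lemma tE_comp_tD : (tE s).comp (tD s) = 0 := by
  apply Finsupp.lhom_ext
  intro n r
  rw [LinearMap.comp_apply, tD_single, map_sub, tE_single, tE_single,
    LinearMap.zero_apply, sub_eq_zero, Localization.mk_eq_mk_iff]
  apply Localization.r_of_eq
  show s ^ (n+1) * r = s ^ n * (s * r)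
  ring

lemma tE_surj : Function.Surjective (tE s) := by
  intro x
  induction x using Localization.induction_on with
  | H p =>
    obtain ⟨a, u⟩ := p
    obtain ⟨k, hk⟩ := u.2
    refine ⟨Finsupp.single k a, ?_⟩
    rw [tE_single]
    congr 1
    exact Subtype.ext hk

lemma tD_shift (n k : ℕ) (r : R) :
    Finsupp.single n r - Finsupp.single (n + k) (s ^ k * r)
      ∈ LinearMap.range (tD s) := by
  induction k with
  | zero =>
    simp only [pow_zero, one_mul, Nat.add_zero, sub_self]
    exact Submodule.zero_mem _
  | succ k ihk =>
    have h2 : Finsupp.single (n+k) (s^k * r) - Finsupp.single (n+(k+1)) (s^(k+1) * r)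
        ∈ LinearMap.range (tD s) := by
      refine ⟨Finsupp.single (n+k) (s^k*r), ?_⟩
      rw [tD_single]
      congr 2
      rw [← mul_assoc, ← pow_succ']
    have h3 := Submodule.add_mem _ ihk h2
    rwa [sub_add_sub_cancel] at h3

lemma tD_reduce (f : ℕ →₀ R) :
    ∃ N b, f - Finsupp.single N b ∈ LinearMap.range (tD s) := by
  induction f using Finsupp.induction with
  | zero => exact ⟨0, 0, by simp⟩
  | single_add a r f ha hr ih =>
    obtain ⟨N, c, hf⟩ := ih
    refine ⟨a + N, s ^ N * r + s ^ a * c, ?_⟩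
    have h1 := tD_shift s a N r
    have h2 := tD_shift s N a c
    rw [Nat.add_comm N a] at h2
    have h3 := Submodule.add_mem _ (Submodule.add_mem _ h1 hf) h2
    have heq : Finsupp.single a r + f - Finsupp.single (a+N) (s^N*r + s^a*c)
        = (Finsupp.single a r - Finsupp.single (a+N) (s^N*r)) + (f - Finsupp.single N c)
          + (Finsupp.single N c - Finsupp.single (a+N) (s^a*c)) := by
      rw [Finsupp.single_add]
      abel
    rw [heq]
    exact h3

lemma tE_ker (f : ℕ →₀ R) (hf : tE s f = 0) : f ∈ LinearMap.range (tD s) := by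
  obtain ⟨N, c, hmem⟩ := tD_reduce s f
  have hrk : ∀ g ∈ LinearMap.range (tD s), tE s g = 0 := by
    rintro g ⟨y, rfl⟩
    have h4 := LinearMap.congr_fun (tE_comp_tD s) y
    simpa using h4
  have hEc : tE s (Finsupp.single N c) = 0 := by
    have h5 := hrk _ hmem
    rw [map_sub, hf, zero_sub, neg_eq_zero] at h5
    exact h5
  rw [tE_single] at hEc
  have h6 : Localization.mk c (⟨s ^ N, ⟨N, rfl⟩⟩ : Submonoid.powers s)
      = Localization.mk 0 1 := by
    rw [hEc, Localization.mk_zero]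
  rw [Localization.mk_eq_mk_iff, Localization.r_iff_exists] at h6
  obtain ⟨u, hu⟩ := h6
  obtain ⟨k, hk⟩ := u.2
  have hc : s ^ k * c = 0 := by
    have h7 : (u : R) * c = 0 := by simpa using hu
    have hk' : s ^ k = (u : R) := hk
    rw [hk']
    exact h7
  have hsingle : Finsupp.single N c ∈ LinearMap.range (tD s) := by
    have h8 := tD_shift s N k c
    rw [hc, Finsupp.single_zero, sub_zero] at h8
    exact h8
  have h9 := Submodule.add_mem _ hmem hsingle
  rwa [sub_add_cancel] at h9

lemma tD_apply_zero (f : ℕ →₀ R) : (tD s f) 0 = f 0 := by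
  have h : (Finsupp.lapply 0 : (ℕ →₀ R) →ₗ[R] R).comp (tD s) = Finsupp.lapply 0 := by
    apply Finsupp.lhom_ext
    intro a r
    simp [tD_single, Finsupp.single_apply]
  exact LinearMap.congr_fun h f

lemma tD_apply_succ (f : ℕ →₀ R) (n : ℕ) : (tD s f) (n+1) = f (n+1) - s * f n := by
  have h : (Finsupp.lapply (n+1) : (ℕ →₀ R) →ₗ[R] R).comp (tD s)
      = Finsupp.lapply (n+1) - s • Finsupp.lapply n := by
    apply Finsupp.lhom_ext
    intro a r
    simp only [LinearMap.comp_apply, Finsupp.lapply_apply, tD_single, Finsupp.sub_apply,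
      LinearMap.sub_apply, LinearMap.smul_apply, smul_eq_mul, Finsupp.single_apply,
      add_left_inj]
    split_ifs <;> simp_all
  have h2 := LinearMap.congr_fun h f
  simpa using h2

lemma tD_inj : Function.Injective (tD s) := by
  apply (injective_iff_map_eq_zero (tD s)).mpr
  intro f hf0
  have hz : ∀ n, f n = 0 := by
    intro n
    induction n with
    | zero =>
      have h1 := tD_apply_zero s f
      rw [hf0] at h1
      simpa using h1.symm
    | succ n ihn =>
      have h1 := tD_apply_succ s f n
      rw [hf0, ihn, mul_zero, sub_zero] at h1
      simpa using h1.symm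
  exact Finsupp.ext hz

end Tele

section Cat

variable (R : Type) [CommRing R] (s : R)

noncomputable def teleX (R : Type) [CommRing R] : ℕ → ModuleCat R
  | 0 => ModuleCat.of R (ℕ →₀ R)
  | 1 => ModuleCat.of R (ℕ →₀ R)
  | _ + 2 => ModuleCat.of R (PEmpty →₀ R)

noncomputable def teled : ∀ n : ℕ, teleX R (n + 1) ⟶ teleX R n
  | 0 => ModuleCat.ofHom (tD s)
  | _ + 1 => 0

noncomputable def teleC : ChainComplex (ModuleCat R) ℕ :=
  ChainComplex.of (teleX R) (teled R s) (fun n => by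
    cases n <;> exact zero_comp)

lemma teleC_d10 : (teleC R s).d 1 0 = ModuleCat.ofHom (tD s) :=
  ChainComplex.of_d (teleX R) (teled R s) 0

lemma teleC_d21 : (teleC R s).d 2 1 = 0 :=
  ChainComplex.of_d (teleX R) (teled R s) 1

lemma hdE : (teleC R s).d 1 0 ≫ ModuleCat.ofHom (tE s) = 0 := by
  rw [teleC_d10]
  exact ModuleCat.hom_ext (LinearMap.ext fun x => LinearMap.congr_fun (tE_comp_tD s) x)

lemma teleC_exactAt (n : ℕ) : (teleC R s).ExactAt (n+1) := by
  rw [HomologicalComplex.exactAt_iff' _ (n+2) (n+1) n (by simp) (by simp)]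
  dsimp only [HomologicalComplex.sc', HomologicalComplex.shortComplexFunctor']
  cases n with
  | zero =>
    rw [ShortComplex.moduleCat_exact_iff]
    intro x hx
    have hx' : tD s x = 0 := hx
    have hx0 : x = 0 := tD_inj s (hx'.trans (map_zero (tD s)).symm)
    refine ⟨0, ?_⟩
    subst hx0
    exact map_zero _
  | succ n =>
    exact ShortComplex.exact_of_isZero_X₂ _
      (ModuleCat.isZero_of_subsingleton (ModuleCat.of R (PEmpty →₀ R)))

noncomputable def teleRes : ProjectiveResolution (ModuleCat.of R (Localization.Away s)) where
  complex := teleC R s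
  projective n := by
    match n with
    | 0 => exact ModuleCat.projective_of_free (ι := ℕ) Finsupp.basisSingleOne
    | 1 => exact ModuleCat.projective_of_free (ι := ℕ) Finsupp.basisSingleOne
    | (n+2) => exact ModuleCat.projective_of_free (ι := PEmpty) Finsupp.basisSingleOne
  π := (ChainComplex.toSingle₀Equiv _ _).symm ⟨ModuleCat.ofHom (tE s), hdE R s⟩
  quasiIso := by
    constructor
    intro n
    cases n with
    | zero =>
      rw [ChainComplex.quasiIsoAt₀_iff, ShortComplex.quasiIso_iff_of_zeros']
      rotate_left
      · exact (teleC R s).shape 0 0 (by simp)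
      · rfl
      · rfl
      constructor
      · rw [ShortComplex.moduleCat_exact_iff]
        intro x hx
        have hx' : tE s x = 0 := hx
        obtain ⟨y, hy⟩ := tE_ker s x hx'
        exact ⟨y, hy⟩
      · have hepi : Epi (ModuleCat.ofHom (tE s)) :=
          (ModuleCat.epi_iff_surjective _).mpr (tE_surj s)
        exact hepi
    | succ n =>
      rw [quasiIsoAt_iff_exactAt']
      · exact teleC_exactAt R s n
      · exact ChainComplex.exactAt_succ_single_obj _ _

theorem solv_of_ext (C : Type) [AddCommGroup C] [Module R C]
    (hExt : Subsingleton (((Ext R (ModuleCat R) 1).obj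
      (op (ModuleCat.of R (Localization.Away s)))).obj (ModuleCat.of R C))) :
    ∀ c : ℕ → C, ∃ b : ℕ → C, ∀ n, b n = c n + s • b (n + 1) := by
  intro c
  haveI := hExt
  have hz : IsZero (((teleRes R s).complex.linearYonedaObj R (ModuleCat.of R C)).homology 1) :=
    (ModuleCat.isZero_of_subsingleton _).of_iso ((teleRes R s).isoExt 1 (ModuleCat.of R C)).symm
  have hex : (((teleRes R s).complex.linearYonedaObj R (ModuleCat.of R C))).ExactAt 1 :=
    (HomologicalComplex.exactAt_iff_isZero_homology _ 1).mpr hz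
  rw [HomologicalComplex.exactAt_iff' _ 0 1 2 (by simp) (by simp),
    ShortComplex.moduleCat_exact_iff] at hex
  set φ : (ℕ →₀ R) →ₗ[R] C := Finsupp.lsum ℕ fun n => LinearMap.toSpanSingleton R C (c n) with hφ
  have hsub : Subsingleton ((teleX R 2) ⟶ (ModuleCat.of R C)) := by
    constructor
    intro f g
    apply ModuleCat.hom_ext
    apply LinearMap.ext
    intro v
    have hv : v = (0 : PEmpty →₀ R) := @Subsingleton.elim (PEmpty →₀ R) inferInstance v 0
    subst hv
    exact (map_zero _).trans (map_zero _).symm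
  obtain ⟨ψ₀, hψ⟩ := hex (ModuleCat.ofHom φ) (@Subsingleton.elim _ hsub _ _)
  let ψ : (ℕ →₀ R) →ₗ[R] C := ψ₀.hom
  have h3 : ψ.comp (tD s) = φ := congrArg ModuleCat.Hom.hom hψ
  have happ : ∀ x : ℕ →₀ R, ψ (tD s x) = φ x := fun x => LinearMap.congr_fun h3 x
  refine ⟨fun n => ψ (Finsupp.single n 1), fun n => ?_⟩
  have e1 := happ (Finsupp.single n 1)
  rw [tD_single, map_sub] at e1
  have e2 : Finsupp.single (n+1) (s * 1) = s • Finsupp.single (n+1) (1:R) := by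
    rw [Finsupp.smul_single, smul_eq_mul]
  rw [e2, map_smul] at e1
  have e3 : φ (Finsupp.single n 1) = c n := by
    rw [hφ]
    simp
  rw [e3] at e1
  exact sub_eq_iff_eq_add.mp e1

end Cat

end ContraAux

open CategoryTheory Opposite

/-- Let `R` be a commutative ring and `I ⊆ R` the ideal generated by
`s₁, …, s_m`. If an `R`-module `C` satisfies `Ext¹_R(R[s_j⁻¹], C) = 0` for each `j`, then
`C` is `I`-adically complete: the canonical map `C → lim_n C/IⁿC` is surjective. -/
theorem contraadjusted_for_generators_implies_adically_complete
    (R : Type) [CommRing R] (m : ℕ) (s : Fin m → R) (I : Ideal R)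
    (hI : I = Ideal.span (Set.range s))
    (C : Type) [AddCommGroup C] [Module R C]
    (h : ∀ j : Fin m, Subsingleton (((Ext R (ModuleCat R) 1).obj
      (op (ModuleCat.of R (Localization.Away (s j))))).obj (ModuleCat.of R C))) :
    Function.Surjective (AdicCompletion.of I C) := by
  subst hI
  intro x
  have hs : ∀ j, ContraAux.Solv (s j) C := fun j => ContraAux.solv_of_ext R (s j) C (h j)
  have hy0 := fun n => Submodule.Quotient.mk_surjective _ (x.val n)
  choose y hy using hy0
  have hf : ∀ n, y (n+1) - y n ∈ ((Ideal.span (Set.range s)) ^ n • (⊤ : Submodule R C)) := by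
    intro n
    have h1 := x.property (Nat.le_succ n)
    rw [← hy (n+1), ← hy n] at h1
    exact (Submodule.Quotient.eq _).mp h1
  obtain ⟨b, hb⟩ := ContraAux.partialSum m s hs (fun n => y (n+1) - y n) hf
  refine ⟨b + y 0, ?_⟩
  apply AdicCompletion.ext
  intro n
  rw [← hy n]
  have h2 := hb n
  rw [Finset.sum_range_sub y n] at h2
  have heq : b - (y n - y 0) = b + y 0 - y n := by abel
  rw [heq] at h2
  exact (Submodule.Quotient.eq _).mpr h2
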